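/- Let Δ be a real number with Δ ≥ e^{e⁴}. Let H be a finite bipartite graph with parts A and B whose maximum degree is at most Δ, and in which every vertex of A has degree at least 100Δ/log Δ (natural logarithm). Then there exists a function θ : A → B such that a is adjacent to θ(a) in H for every a ∈ A, and for every b ∈ B the preimage θ⁻¹(b) has size at most (1/2)·log Δ. -/

import Mathlib

/-- Lemma 8: in a finite bipartite graph with parts `A`, `B`, maximum degree at most
`Δ ≥ e^{e⁴}`, where every vertex of `A` has degree at least `100Δ/log Δ`, there is a
map `θ : A → B` along edges all of whose fibers have size at most `(1/2)·log Δ`. -/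
theorem exists_map_small_fibers (Δ : ℝ) (hΔ : Real.exp (Real.exp 4) ≤ Δ)
    (V : Type) [Fintype V] [DecidableEq V] (G : SimpleGraph V) [DecidableRel G.Adj]
    (A B : Finset V)
    (hcover : ∀ v : V, v ∈ A ∨ v ∈ B) (hdisj : Disjoint A B)
    (hbip : ∀ u v : V, G.Adj u v →
      ¬(u ∈ A ∧ v ∈ A) ∧ ¬(u ∈ B ∧ v ∈ B))
    (hmaxdeg : ∀ v : V, (G.degree v : ℝ) ≤ Δ)
    (hAdeg : ∀ a ∈ A, 100 * Δ / Real.log Δ ≤ (G.degree a : ℝ)) :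
    ∃ θ : V → V,
      (∀ a ∈ A, θ a ∈ B ∧ G.Adj a (θ a)) ∧
      (∀ b ∈ B, ((A.filter fun a => θ a = b).card : ℝ) ≤ (1 / 2) * Real.log Δ) := by
  set L : ℝ := Real.log Δ with hLdef
  have hΔ0 : (0:ℝ) < Δ := lt_of_lt_of_le (Real.exp_pos _) hΔ
  have hL5 : (5:ℝ) ≤ L := by
    have h1 : Real.exp 4 ≤ L := (Real.le_log_iff_exp_le hΔ0).2 hΔ
    nlinarith [Real.add_one_le_exp (4:ℝ)]
  set k : ℕ := ⌊L / 2⌋₊ with hkdef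
  have hk1 : (k:ℝ) ≤ L / 2 := Nat.floor_le (by linarith)
  have hk2 : L / 100 ≤ (k:ℝ) := by
    have := Nat.sub_one_lt_floor (L / 2)
    linarith
  have hkpos : 0 < k := by
    have : (0:ℝ) < (k:ℝ) := lt_of_lt_of_le (by linarith) hk2
    exact_mod_cast this
  -- capacitated Hall: duplicate each potential image into `k` copies
  set t : ↥A → Finset (V × Fin k) :=
    fun a => (G.neighborFinset ↑a) ×ˢ (Finset.univ : Finset (Fin k)) with htdef
  have hall : ∀ s : Finset ↥A, s.card ≤ (s.biUnion t).card := by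
    intro s
    set N : Finset V := s.biUnion (fun a => G.neighborFinset ↑a) with hNdef
    have heq : s.biUnion t = N ×ˢ (Finset.univ : Finset (Fin k)) := by
      ext ⟨b, i⟩
      simp [htdef, hNdef, Finset.mem_biUnion]
    have hcardU : (s.biUnion t).card = N.card * k := by
      rw [heq, Finset.card_product, Finset.card_univ, Fintype.card_fin]
    -- double counting of edges between `s` and `N`
    have hfil : ∀ a ∈ s, G.neighborFinset (↑a : V) =
        N.filter (fun b => G.Adj ↑a b) := by
      intro a ha
      ext b
      simp only [Finset.mem_filter, hNdef, Finset.mem_biUnion,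
        SimpleGraph.mem_neighborFinset]
      exact ⟨fun h => ⟨⟨a, ha, h⟩, h⟩, fun h => h.2⟩
    have hsum : ∑ a ∈ s, G.degree (↑a : V) =
        ∑ b ∈ N, (s.filter (fun a : ↥A => G.Adj ↑a b)).card := by
      calc ∑ a ∈ s, G.degree (↑a : V)
          = ∑ a ∈ s, (N.filter (fun b => G.Adj ↑a b)).card := by
            refine Finset.sum_congr rfl fun a ha => ?_
            rw [← hfil a ha, SimpleGraph.card_neighborFinset_eq_degree]
        _ = ∑ a ∈ s, ∑ b ∈ N, (if G.Adj ↑a b then 1 else 0) :=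
            Finset.sum_congr rfl fun a _ => Finset.card_filter _ _
        _ = ∑ b ∈ N, ∑ a ∈ s, (if G.Adj ↑a b then 1 else 0) := Finset.sum_comm
        _ = ∑ b ∈ N, (s.filter (fun a : ↥A => G.Adj ↑a b)).card :=
            Finset.sum_congr rfl fun b _ => (Finset.card_filter _ _).symm
    have hcb : ∀ b ∈ N, ((s.filter (fun a : ↥A => G.Adj ↑a b)).card : ℝ) ≤ Δ := by
      intro b _
      refine le_trans ?_ (hmaxdeg b)
      have : (s.filter (fun a : ↥A => G.Adj ↑a b)).card ≤ G.degree b := by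
        rw [← SimpleGraph.card_neighborFinset_eq_degree]
        refine Finset.card_le_card_of_injOn (fun a : ↥A => (a : V)) ?_ ?_
        · intro a ha
          simp only [Finset.mem_coe, Finset.mem_filter] at ha
          simpa [SimpleGraph.mem_neighborFinset] using ha.2.symm
        · exact fun x _ y _ h => Subtype.ext h
      exact_mod_cast this
    have hlower : (s.card : ℝ) * (100 * Δ / L) ≤ ∑ a ∈ s, (G.degree (↑a : V) : ℝ) := by
      have := Finset.card_nsmul_le_sum s (fun a => (G.degree (↑a : V) : ℝ))
        (100 * Δ / L) (fun a _ => hAdeg ↑a a.2)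
      simpa [nsmul_eq_mul] using this
    have hupper : ∑ b ∈ N, ((s.filter (fun a : ↥A => G.Adj ↑a b)).card : ℝ) ≤ N.card * Δ := by
      have := Finset.sum_le_card_nsmul N
        (fun b => ((s.filter (fun a : ↥A => G.Adj ↑a b)).card : ℝ)) Δ hcb
      simpa [nsmul_eq_mul] using this
    have hmid : ∑ a ∈ s, (G.degree (↑a : V) : ℝ) =
        ∑ b ∈ N, ((s.filter (fun a : ↥A => G.Adj ↑a b)).card : ℝ) := by
      exact_mod_cast congrArg (Nat.cast : ℕ → ℝ) hsum
    have hL0 : (0:ℝ) < L := by linarith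
    have hreal : (s.card : ℝ) ≤ (N.card : ℝ) * k := by
      have h1 : (s.card : ℝ) * (100 * Δ / L) ≤ (N.card : ℝ) * Δ := by
        rw [← hmid] at hupper; linarith
      have h2 : (s.card : ℝ) * (100 * Δ) ≤ (N.card : ℝ) * Δ * L := by
        have := mul_le_mul_of_nonneg_right h1 (le_of_lt hL0)
        calc (s.card : ℝ) * (100 * Δ) = (s.card : ℝ) * (100 * Δ / L) * L := by
              field_simp
          _ ≤ (N.card : ℝ) * Δ * L := this
      have h3 : (s.card : ℝ) ≤ (N.card : ℝ) * (L / 100) := by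
        nlinarith
      calc (s.card : ℝ) ≤ (N.card : ℝ) * (L / 100) := h3
        _ ≤ (N.card : ℝ) * k := by
            apply mul_le_mul_of_nonneg_left ?_ (by positivity)
            linarith
    rw [hcardU]
    exact_mod_cast hreal
  obtain ⟨f, hfinj, hft⟩ := (Finset.all_card_le_biUnion_card_iff_exists_injective t).1 hall
  -- the map
  classical
  refine ⟨fun v => if h : v ∈ A then (f ⟨v, h⟩).1 else v, ?_, ?_⟩
  · intro a ha
    have hmem := hft ⟨a, ha⟩
    simp only [htdef, Finset.mem_product] at hmem
    have hadj : G.Adj a (f ⟨a, ha⟩).1 := by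
      have := hmem.1
      rwa [SimpleGraph.mem_neighborFinset] at this
    have hB : (f ⟨a, ha⟩).1 ∈ B := by
      rcases hcover (f ⟨a, ha⟩).1 with hA' | hB'
      · exact absurd ⟨ha, hA'⟩ (hbip a _ hadj).1
      · exact hB'
    simp only [dif_pos ha]
    exact ⟨hB, hadj⟩
  · intro b hb
    have hcard : (A.filter fun a =>
        (if h : a ∈ A then (f ⟨a, h⟩).1 else a) = b).card ≤ k := by
      have := Finset.card_le_card_of_injOn
        (f := fun a => if h : a ∈ A then (f ⟨a, h⟩).2 else ⟨0, hkpos⟩)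
        (s := A.filter fun a => (if h : a ∈ A then (f ⟨a, h⟩).1 else a) = b)
        (t := (Finset.univ : Finset (Fin k)))
        (fun a _ => Finset.mem_univ _) ?_
      · simpa using this
      · intro x hx y hy hxy
        simp only [Finset.mem_coe, Finset.mem_filter] at hx hy
        obtain ⟨hxA, hxb⟩ := hx
        obtain ⟨hyA, hyb⟩ := hy
        simp only [dif_pos hxA, dif_pos hyA] at hxb hyb hxy
        have : f ⟨x, hxA⟩ = f ⟨y, hyA⟩ := Prod.ext (hxb.trans hyb.symm) hxy
        have := hfinj this
        exact congrArg Subtype.val this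
    calc ((A.filter fun a =>
        (if h : a ∈ A then (f ⟨a, h⟩).1 else a) = b).card : ℝ)
        ≤ (k : ℝ) := by exact_mod_cast hcard
      _ ≤ (1 / 2) * L := by linarith
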